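/- Let κ be a Markov kernel on a Polish space X which is strong Feller. Then κ admits at most countably many ergodic invariant probability measures; that is, the set of ergodic invariant probability measures of κ is countable. -/

import Mathlib

open MeasureTheory ProbabilityTheory
open scoped ENNReal

set_option linter.unusedSectionVars false

/-- A Markov kernel is *strong Feller* if it maps bounded Borel measurable functions to
bounded continuous functions. -/
def IsStrongFeller {X : Type*} [TopologicalSpace X] [MeasurableSpace X]
    (κ : Kernel X X) : Prop :=
  ∀ ψ : X → ℝ, Measurable ψ → (∃ C, ∀ x, |ψ x| ≤ C) →
    Continuous fun x => ∫ y, ψ y ∂(κ x)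

/-- A measure `μ` is *invariant* for the kernel `κ` if `μ A = ∫ κ(x, A) μ(dx)` for every
Borel set `A`. -/
def KernelInvariant {X : Type*} [MeasurableSpace X] (κ : Kernel X X) (μ : Measure X) : Prop :=
  ∀ A : Set X, MeasurableSet A → μ A = ∫⁻ x, κ x A ∂μ

/-- An invariant measure `μ` is *ergodic* for `κ` if every Borel set `A` with
`κ(x, A) = 1` for `μ`-almost every `x ∈ A` satisfies `μ A ∈ {0, 1}`. -/
def KernelErgodic {X : Type*} [MeasurableSpace X] (κ : Kernel X X) (μ : Measure X) : Prop :=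
  ∀ A : Set X, MeasurableSet A → (∀ᵐ x ∂μ, x ∈ A → κ x A = 1) → μ A = 0 ∨ μ A = 1

lemma absorbing_aux {X : Type*} [MeasurableSpace X] (κ : Kernel X X) [IsMarkovKernel κ]
    {lam : Measure X} [IsFiniteMeasure lam] (hlamI : KernelInvariant κ lam)
    {mu : Measure X} [IsFiniteMeasure mu] (hmuI : KernelInvariant κ mu)
    {g : X → ℝ≥0∞} (hg : Measurable g) (hmu : mu = lam.withDensity g)
    (c : ℝ≥0∞) (hc : c ≠ ∞) :
    ∀ᵐ x ∂lam, c < g x → κ x {y | c < g y} = 1 := by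
  set A : Set X := {y | c < g y} with hAdef
  have hA : MeasurableSet A := measurableSet_lt measurable_const hg
  set k : X → ℝ≥0∞ := fun x => κ x A with hkdef
  have hk : Measurable k := Kernel.measurable_coe κ hA
  have hk1 : ∀ x, k x ≤ 1 := fun x => prob_le_one
  -- cancellation identity
  have cancel : ∀ f : X → ℝ≥0∞, Measurable f → (∫⁻ x in A, k x * f x ∂lam ≠ ∞) →
      (∫⁻ x in A, f x ∂lam = ∫⁻ x, k x * f x ∂lam) →
      ∫⁻ x in A, (1 - k x) * f x ∂lam = ∫⁻ x in Aᶜ, k x * f x ∂lam := by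
    intro f hf hfin heq
    have hpt : ∀ x, f x = k x * f x + (1 - k x) * f x := by
      intro x
      rw [← add_mul, add_tsub_cancel_of_le (hk1 x), one_mul]
    have h1 : ∫⁻ x in A, f x ∂lam
        = ∫⁻ x in A, k x * f x ∂lam + ∫⁻ x in A, (1 - k x) * f x ∂lam := by
      rw [← lintegral_add_left (f := fun x => k x * f x) (hk.mul hf)]
      exact lintegral_congr fun x => hpt x
    have h2 : ∫⁻ x, k x * f x ∂lam
        = ∫⁻ x in A, k x * f x ∂lam + ∫⁻ x in Aᶜ, k x * f x ∂lam :=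
      (lintegral_add_compl _ hA).symm
    rw [h1, h2] at heq
    exact (ENNReal.add_right_inj hfin).mp heq
  have hE1 : ∫⁻ x in A, (1 - k x) * g x ∂lam = ∫⁻ x in Aᶜ, k x * g x ∂lam := by
    apply cancel g hg
    · have hle : ∫⁻ x in A, k x * g x ∂lam ≤ ∫⁻ x, g x ∂lam := by
        refine le_trans (setLIntegral_mono hg fun x _ => ?_) (setLIntegral_le_lintegral _ _)
        exact mul_le_of_le_one_left zero_le (hk1 x)
      have : ∫⁻ x, g x ∂lam = mu Set.univ := by
        rw [hmu, withDensity_apply _ MeasurableSet.univ, Measure.restrict_univ]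
      exact ne_top_of_le_ne_top (this ▸ measure_ne_top mu _) hle
    · have h1 : ∫⁻ x in A, g x ∂lam = mu A := (withDensity_apply _ hA).symm.trans (by rw [← hmu])
      have h2 : mu A = ∫⁻ x, k x ∂mu := hmuI A hA
      have h3 : ∫⁻ x, k x ∂mu = ∫⁻ x, k x * g x ∂lam := by
        rw [hmu, lintegral_withDensity_eq_lintegral_mul _ hg hk]
        exact lintegral_congr fun x => mul_comm _ _
      rw [h1, h2, h3]
  have hE2 : ∫⁻ x in A, (1 - k x) * c ∂lam = ∫⁻ x in Aᶜ, k x * c ∂lam := by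
    apply cancel (fun _ => c) measurable_const
    · refine ne_top_of_le_ne_top (ENNReal.mul_ne_top (measure_ne_top lam Set.univ) hc) ?_
      calc ∫⁻ x in A, k x * c ∂lam ≤ ∫⁻ x in A, 1 * c ∂lam :=
            setLIntegral_mono measurable_const fun x _ =>
              mul_le_mul_left (hk1 x) c
        _ ≤ ∫⁻ _x, 1 * c ∂lam := setLIntegral_le_lintegral _ _
        _ = lam Set.univ * c := by simp [lintegral_const, mul_comm]
    · rw [setLIntegral_const, lintegral_mul_const _ hk, ← hlamI A hA]; exact mul_comm _ _
  have h3 : ∫⁻ x in Aᶜ, k x * g x ∂lam ≤ ∫⁻ x in Aᶜ, k x * c ∂lam := by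
    refine setLIntegral_mono (hk.mul measurable_const) fun x hx => ?_
    exact mul_le_mul_right (not_lt.mp (by simpa [hAdef] using hx)) _
  have hsplit : ∫⁻ x in A, (1 - k x) * g x ∂lam
      = ∫⁻ x in A, (1 - k x) * (g x - c) ∂lam + ∫⁻ x in A, (1 - k x) * c ∂lam := by
    rw [← lintegral_add_left (f := fun x => (1 - k x) * (g x - c)) ((measurable_const.sub hk).mul (hg.sub measurable_const))]
    refine setLIntegral_congr_fun hA (fun x hx => ?_)
    rw [← mul_add, tsub_add_cancel_of_le (le_of_lt hx)]
  have hb : ∫⁻ x in A, (1 - k x) * c ∂lam ≠ ∞ := by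
    refine ne_top_of_le_ne_top (ENNReal.mul_ne_top hc (measure_ne_top lam A)) ?_
    calc ∫⁻ x in A, (1 - k x) * c ∂lam ≤ ∫⁻ _x in A, c ∂lam :=
          setLIntegral_mono measurable_const fun x _ =>
            mul_le_of_le_one_left zero_le tsub_le_self
      _ = c * lam A := setLIntegral_const _ _
  have hzero : ∫⁻ x in A, (1 - k x) * (g x - c) ∂lam = 0 := by
    have hle : ∫⁻ x in A, (1 - k x) * (g x - c) ∂lam + ∫⁻ x in A, (1 - k x) * c ∂lam
        ≤ 0 + ∫⁻ x in A, (1 - k x) * c ∂lam := by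
      rw [zero_add, ← hsplit, hE1, hE2]
      exact h3
    exact le_zero_iff.mp ((ENNReal.add_le_add_iff_right hb).mp hle)
  have hae : ∀ᵐ x ∂(lam.restrict A), (1 - k x) * (g x - c) = 0 :=
    (lintegral_eq_zero_iff ((measurable_const.sub hk).mul (hg.sub measurable_const))).mp hzero
  rw [ae_restrict_iff' hA] at hae
  filter_upwards [hae] with x hx hcx
  have h0 : (1 - k x) * (g x - c) = 0 := hx hcx
  rcases mul_eq_zero.mp h0 with h | h
  · exact le_antisymm (hk1 x) (tsub_eq_zero_iff_le.mp h)
  · exact absurd (tsub_eq_zero_iff_le.mp h) (not_le.mpr hcx)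

lemma eq_const_ae {X : Type*} [MeasurableSpace X] {mu : Measure X} [IsProbabilityMeasure mu]
    {g : X → ℝ≥0∞} (hg : Measurable g)
    (h01 : ∀ c : ℝ≥0∞, c ≠ ∞ → mu {y | c < g y} = 0 ∨ mu {y | c < g y} = 1) :
    ∀ᵐ x ∂mu, g x = sSup {c : ℝ≥0∞ | mu {y | c < g y} = 1} := by
  set S : Set ℝ≥0∞ := {c : ℝ≥0∞ | mu {y | c < g y} = 1} with hS
  set c₀ := sSup S with hc₀
  have hmeas : ∀ c : ℝ≥0∞, MeasurableSet {y | c < g y} :=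
    fun c => measurableSet_lt measurable_const hg
  -- above
  have habove : mu {x | c₀ < g x} = 0 := by
    have hsub : {x | c₀ < g x} ⊆ ⋃ q : ℚ,
        (if c₀ < (Real.toNNReal q : ℝ≥0∞) then {x | (Real.toNNReal q : ℝ≥0∞) < g x} else ∅) := by
      intro x hx
      obtain ⟨q, _, hq1, hq2⟩ := ENNReal.lt_iff_exists_rat_btwn.mp hx
      exact Set.mem_iUnion.mpr ⟨q, by rw [if_pos hq1]; exact hq2⟩
    refine measure_mono_null hsub (measure_iUnion_null fun q => ?_)
    split_ifs with hq
    · rcases h01 _ ENNReal.coe_ne_top with h | h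
      · exact h
      · exact absurd (le_sSup (show (Real.toNNReal q : ℝ≥0∞) ∈ S from h)) (not_le.mpr hq)
    · exact measure_empty
  -- below
  have hbelow : mu {x | g x < c₀} = 0 := by
    have hsub : {x | g x < c₀} ⊆ ⋃ q : ℚ,
        (if mu {y | (Real.toNNReal q : ℝ≥0∞) < g y} = 1
          then {x | g x ≤ (Real.toNNReal q : ℝ≥0∞)} else ∅) := by
      intro x hx
      have hx' : g x < sSup S := hx
      obtain ⟨c, hcS, hxc⟩ := lt_sSup_iff.mp hx'
      obtain ⟨q, _, hq1, hq2⟩ := ENNReal.lt_iff_exists_rat_btwn.mp hxc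
      have h1 : mu {y | (Real.toNNReal q : ℝ≥0∞) < g y} = 1 := by
        refine le_antisymm prob_le_one ?_
        calc (1:ℝ≥0∞) = mu {y | c < g y} := hcS.symm
          _ ≤ mu {y | (Real.toNNReal q : ℝ≥0∞) < g y} :=
            measure_mono fun y hy => lt_trans hq2 hy
      exact Set.mem_iUnion.mpr ⟨q, by rw [if_pos h1]; exact le_of_lt hq1⟩
    refine measure_mono_null hsub (measure_iUnion_null fun q => ?_)
    split_ifs with hq
    · have : {x | g x ≤ (Real.toNNReal q : ℝ≥0∞)} = {y | (Real.toNNReal q : ℝ≥0∞) < g y}ᶜ := by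
        ext y; simp [not_lt]
      rw [this, prob_compl_eq_zero_iff (hmeas _)]
      exact hq
    · exact measure_empty
  have : mu {x | ¬ g x = c₀} = 0 := by
    refine measure_mono_null (fun x hx => ?_) (measure_union_null hbelow habove)
    rcases lt_or_gt_of_ne (hx : g x ≠ c₀) with h | h
    · exact Or.inl h
    · exact Or.inr h
  exact this

lemma exists_sep {X : Type*} [MeasurableSpace X] (κ : Kernel X X) [IsMarkovKernel κ]
    {mu nu : Measure X} [IsProbabilityMeasure mu] [IsProbabilityMeasure nu]
    (hmuI : KernelInvariant κ mu) (hnuI : KernelInvariant κ nu)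
    (hmuE : KernelErgodic κ mu) (hnuE : KernelErgodic κ nu) (hne : mu ≠ nu) :
    ∃ A : Set X, MeasurableSet A ∧ ((mu A = 0 ∧ nu A = 1) ∨ (mu A = 1 ∧ nu A = 0)) := by
  set lam : Measure X := mu + nu with hlam
  have hlamI : KernelInvariant κ lam := by
    intro A hA
    show (mu + nu) A = ∫⁻ x, κ x A ∂(mu + nu)
    rw [Measure.add_apply, lintegral_add_measure, hmuI A hA, hnuI A hA]
  set g : X → ℝ≥0∞ := mu.rnDeriv lam with hgdef
  have hg : Measurable g := Measure.measurable_rnDeriv mu lam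
  have hle_mu : mu ≤ lam := Measure.le_add_right le_rfl
  have hle_nu : nu ≤ lam := Measure.le_add_left le_rfl
  have hmu_d : mu = lam.withDensity g :=
    (Measure.withDensity_rnDeriv_eq mu lam
      (Measure.absolutelyContinuous_of_le hle_mu)).symm
  have hmeasA : ∀ c : ℝ≥0∞, MeasurableSet {y | c < g y} :=
    fun c => measurableSet_lt measurable_const hg
  have habs : ∀ c : ℝ≥0∞, c ≠ ∞ → ∀ᵐ x ∂lam, c < g x → κ x {y | c < g y} = 1 :=
    fun c hc => absorbing_aux κ hlamI hmuI hg hmu_d c hc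
  have h01mu : ∀ c : ℝ≥0∞, c ≠ ∞ → mu {y | c < g y} = 0 ∨ mu {y | c < g y} = 1 := by
    intro c hc
    refine hmuE _ (hmeasA c) ?_
    exact ((habs c hc).filter_mono (ae_mono hle_mu)).mono fun x h hx => h hx
  have h01nu : ∀ c : ℝ≥0∞, c ≠ ∞ → nu {y | c < g y} = 0 ∨ nu {y | c < g y} = 1 := by
    intro c hc
    refine hnuE _ (hmeasA c) ?_
    exact ((habs c hc).filter_mono (ae_mono hle_nu)).mono fun x h hx => h hx
  set cm := sSup {c : ℝ≥0∞ | mu {y | c < g y} = 1} with hcm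
  set cn := sSup {c : ℝ≥0∞ | nu {y | c < g y} = 1} with hcn
  have hgmu : ∀ᵐ x ∂mu, g x = cm := eq_const_ae hg h01mu
  have hgnu : ∀ᵐ x ∂nu, g x = cn := eq_const_ae hg h01nu
  rcases lt_trichotomy cm cn with hlt | heq | hgt
  · -- cm < cn : mu A = 0, nu A = 1
    have hcmtop : cm ≠ ∞ := (lt_of_lt_of_le hlt le_top).ne
    obtain ⟨c, hc1, hc2, hcfin⟩ : ∃ c, cm < c ∧ c < cn ∧ c ≠ ∞ := by
      by_cases h : cn = ∞
      · refine ⟨cm + 1, ENNReal.lt_add_right hcmtop one_ne_zero, ?_, ?_⟩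
        · rw [h]; exact ENNReal.add_lt_top.mpr ⟨hcmtop.lt_top, ENNReal.one_lt_top⟩
        · exact (ENNReal.add_lt_top.mpr ⟨hcmtop.lt_top, ENNReal.one_lt_top⟩).ne
      · obtain ⟨c, h1, h2⟩ := exists_between hlt
        exact ⟨c, h1, h2, (h2.trans (lt_top_iff_ne_top.mpr h)).ne⟩
    refine ⟨{y | c < g y}, hmeasA c, Or.inl ⟨?_, ?_⟩⟩
    · refine measure_eq_zero_iff_ae_notMem.mpr (hgmu.mono fun x hx => ?_)
      show ¬ c < g x
      rw [hx]
      exact not_lt.mpr hc1.le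
    · rw [← prob_compl_eq_zero_iff (hmeasA c)]
      refine measure_eq_zero_iff_ae_notMem.mpr (hgnu.mono fun x hx => ?_)
      simp only [Set.notMem_compl_iff, Set.mem_setOf_eq, hx]
      exact hc2
  · -- cm = cn : contradiction
    exfalso
    have hglam : ∀ᵐ x ∂lam, g x = cm := by
      rw [hlam, ae_add_measure_iff]
      exact ⟨hgmu, heq ▸ hgnu⟩
    have hmuc : mu = cm • lam := by
      rw [hmu_d, withDensity_congr_ae (μ := lam) (g := fun _ => cm) hglam,
        withDensity_const]
    have h2 : (2:ℝ≥0∞) * cm = 1 := by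
      have h := congrArg (fun m : Measure X => m Set.univ) hmuc
      simp only [Measure.smul_apply, smul_eq_mul, hlam, Measure.add_apply,
        measure_univ] at h
      rw [h]
      ring
    have hBeq : ∀ B : Set X, MeasurableSet B → mu B = nu B := by
      intro B hB
      have h3 : mu B = cm * (mu B + nu B) := by
        conv_lhs => rw [hmuc]
        simp [Measure.smul_apply, smul_eq_mul, hlam, Measure.add_apply, mul_add]
      have h4 : mu B + mu B = mu B + nu B := by
        calc mu B + mu B = 2 * mu B := (two_mul _).symm
          _ = 2 * (cm * (mu B + nu B)) := by rw [← h3]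
          _ = (2 * cm) * (mu B + nu B) := by ring
          _ = mu B + nu B := by rw [h2, one_mul]
      exact (ENNReal.add_right_inj (measure_ne_top mu B)).mp h4
    exact hne (Measure.ext hBeq)
  · -- cn < cm : mu A = 1, nu A = 0
    have hcntop : cn ≠ ∞ := (lt_of_lt_of_le hgt le_top).ne
    obtain ⟨c, hc1, hc2, hcfin⟩ : ∃ c, cn < c ∧ c < cm ∧ c ≠ ∞ := by
      by_cases h : cm = ∞
      · refine ⟨cn + 1, ENNReal.lt_add_right hcntop one_ne_zero, ?_, ?_⟩
        · rw [h]; exact ENNReal.add_lt_top.mpr ⟨hcntop.lt_top, ENNReal.one_lt_top⟩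
        · exact (ENNReal.add_lt_top.mpr ⟨hcntop.lt_top, ENNReal.one_lt_top⟩).ne
      · obtain ⟨c, h1, h2⟩ := exists_between hgt
        exact ⟨c, h1, h2, (h2.trans (lt_top_iff_ne_top.mpr h)).ne⟩
    refine ⟨{y | c < g y}, hmeasA c, Or.inr ⟨?_, ?_⟩⟩
    · rw [← prob_compl_eq_zero_iff (hmeasA c)]
      refine measure_eq_zero_iff_ae_notMem.mpr (hgmu.mono fun x hx => ?_)
      simp only [Set.notMem_compl_iff, Set.mem_setOf_eq, hx]
      exact hc2
    · refine measure_eq_zero_iff_ae_notMem.mpr (hgnu.mono fun x hx => ?_)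
      show ¬ c < g x
      rw [hx]
      exact not_lt.mpr hc1.le

lemma kernel_ae_zero {X : Type*} [MeasurableSpace X] (κ : Kernel X X) [IsMarkovKernel κ]
    {μ : Measure X} (hI : KernelInvariant κ μ)
    {A : Set X} (hA : MeasurableSet A) (h0 : μ A = 0) : ∀ᵐ x ∂μ, κ x A = 0 := by
  have := (lintegral_eq_zero_iff (Kernel.measurable_coe κ hA)).mp ((hI A hA).symm.trans h0)
  filter_upwards [this] with x hx using hx

lemma kernel_ae_one {X : Type*} [MeasurableSpace X] (κ : Kernel X X) [IsMarkovKernel κ]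
    {μ : Measure X} [IsProbabilityMeasure μ] (hI : KernelInvariant κ μ)
    {A : Set X} (hA : MeasurableSet A) (h1 : μ A = 1) : ∀ᵐ x ∂μ, κ x A = 1 := by
  have hk : Measurable fun x => κ x A := Kernel.measurable_coe κ hA
  have hint : ∫⁻ x, κ x A ∂μ = 1 := (hI A hA).symm.trans h1
  have hsub : ∫⁻ x, (1 - κ x A) ∂μ = 0 := by
    rw [lintegral_sub hk (by rw [hint]; exact ENNReal.one_ne_top)
      (Filter.Eventually.of_forall fun x => prob_le_one), hint, lintegral_one,
      measure_univ, tsub_self]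
  have := (lintegral_eq_zero_iff (measurable_const.sub hk)).mp hsub
  filter_upwards [this] with x hx
  exact le_antisymm prob_le_one (tsub_eq_zero_iff_le.mp hx)

section Support
variable {X : Type*} [TopologicalSpace X] [MeasurableSpace X] [BorelSpace X]
  [SecondCountableTopology X]

/-- The topological support of a measure. -/
def msupp (μ : Measure X) : Set X := (⋃₀ {U : Set X | IsOpen U ∧ μ U = 0})ᶜ

lemma isClosed_msupp (μ : Measure X) : IsClosed (msupp μ) :=
  (isOpen_sUnion fun _ hU => hU.1).isClosed_compl

lemma measure_compl_msupp (μ : Measure X) : μ (msupp μ)ᶜ = 0 := by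
  rw [msupp, compl_compl]
  obtain ⟨T, hTc, hTsub, hTeq⟩ :=
    TopologicalSpace.isOpen_sUnion_countable {U : Set X | IsOpen U ∧ μ U = 0}
      (fun U hU => hU.1)
  rw [← hTeq]
  exact (measure_sUnion_null_iff hTc).mpr fun U hU => (hTsub hU).2

lemma eq_on_msupp {μ : Measure X} {h : X → ℝ} {c : ℝ} (hh : Continuous h)
    (hae : ∀ᵐ x ∂μ, h x = c) : ∀ x ∈ msupp μ, h x = c := by
  intro x hx
  by_contra hne
  have hop : IsOpen {y | ¬ h y = c} := by
    have : {y | ¬ h y = c} = (h ⁻¹' {c})ᶜ := by ext y; simp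
    rw [this]
    exact (IsClosed.preimage hh isClosed_singleton).isOpen_compl
  have h0 : μ {y | ¬ h y = c} = 0 := hae
  exact hx (Set.mem_sUnion.mpr ⟨_, ⟨hop, h0⟩, hne⟩)

lemma msupp_nonempty (μ : Measure X) [IsProbabilityMeasure μ] : (msupp μ).Nonempty := by
  have h1 : μ (msupp μ) = 1 :=
    (prob_compl_eq_zero_iff (isClosed_msupp μ).measurableSet).mp (measure_compl_msupp μ)
  exact nonempty_of_measure_ne_zero (by rw [h1]; exact one_ne_zero)

end Support


/-- A strong Feller Markov kernel on a Polish space has at most countably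
many ergodic invariant probability measures. -/
theorem countable_ergodic_invariant_of_strongFeller
    {X : Type*} [TopologicalSpace X] [PolishSpace X] [MeasurableSpace X] [BorelSpace X]
    (κ : Kernel X X) [IsMarkovKernel κ] (hSF : IsStrongFeller κ) :
    {μ : Measure X |
      IsProbabilityMeasure μ ∧ KernelInvariant κ μ ∧ KernelErgodic κ μ}.Countable := by
  classical
  set E := {μ : Measure X | IsProbabilityMeasure μ ∧ KernelInvariant κ μ ∧ KernelErgodic κ μ}
    with hE
  have hSF' : ∀ (A : Set X), MeasurableSet A → Continuous fun x => ((κ x) A).toReal := by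
    intro A hA
    have hb : ∃ C, ∀ x, |A.indicator (fun _ => (1:ℝ)) x| ≤ C :=
      ⟨1, fun x => by by_cases hx : x ∈ A <;> simp [Set.indicator_apply, hx]⟩
    have hcont := hSF (A.indicator fun _ => (1:ℝ))
      ((measurable_const (a := (1:ℝ))).indicator hA) hb
    have heq : ∀ x : X, ∫ y, A.indicator (fun _ => (1:ℝ)) y ∂(κ x) = ((κ x) A).toReal := by
      intro x
      rw [integral_indicator_const (1:ℝ) hA]
      simp
      rfl
    simpa only [heq] using hcont
  have hG : ∀ μ : Measure X, Continuous fun x => ((κ x) (msupp μ)).toReal :=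
    fun μ => hSF' _ (isClosed_msupp μ).measurableSet
  set U : Measure X → Set X := fun μ => {x | 1/2 < ((κ x) (msupp μ)).toReal} with hU
  have hUopen : ∀ μ : Measure X, IsOpen (U μ) :=
    fun μ => isOpen_lt continuous_const (hG μ)
  have hsuppU : ∀ μ ∈ E, msupp μ ⊆ U μ := by
    intro μ hμ
    haveI : IsProbabilityMeasure μ := hμ.1
    have h1 : ∀ᵐ x ∂μ, (κ x) (msupp μ) = 1 := by
      have h0 := kernel_ae_zero κ hμ.2.1 (isClosed_msupp μ).measurableSet.compl
        (measure_compl_msupp μ)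
      filter_upwards [h0] with x hx
      exact (prob_compl_eq_zero_iff (μ := κ x) (isClosed_msupp μ).measurableSet).mp hx
    have h2 : ∀ᵐ x ∂μ, ((κ x) (msupp μ)).toReal = 1 := by
      filter_upwards [h1] with x hx; rw [hx]; simp
    have h3 := eq_on_msupp (hG μ) h2
    intro x hx
    show (1:ℝ)/2 < _
    rw [h3 x hx]
    norm_num
  have hUne : ∀ μ ∈ E, (U μ).Nonempty := by
    intro μ hμ
    haveI : IsProbabilityMeasure μ := hμ.1
    obtain ⟨x, hx⟩ := msupp_nonempty μ
    exact ⟨x, hsuppU μ hμ hx⟩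
  have hsupp_disj : ∀ μ ∈ E, ∀ ν ∈ E, μ ≠ ν → ∀ x, x ∈ msupp μ → x ∈ msupp ν → False := by
    intro μ hμ ν hν hne x hxμ hxν
    haveI : IsProbabilityMeasure μ := hμ.1
    haveI : IsProbabilityMeasure ν := hν.1
    obtain ⟨A, hA, hcase⟩ := exists_sep κ hμ.2.1 hν.2.1 hμ.2.2 hν.2.2 hne
    have key : ∀ (m1 m2 : Measure X), IsProbabilityMeasure m1 → IsProbabilityMeasure m2 →
        KernelInvariant κ m1 → KernelInvariant κ m2 → m1 A = 0 → m2 A = 1 →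
        x ∈ msupp m1 → x ∈ msupp m2 → False := by
      intro m1 m2 hP1 hP2 hI1 hI2 h0 h1 hx1 hx2
      haveI := hP1; haveI := hP2
      have hz : ∀ᵐ y ∂m1, ((κ y) A).toReal = 0 := by
        filter_upwards [kernel_ae_zero κ hI1 hA h0] with y hy; rw [hy]; simp
      have ho : ∀ᵐ y ∂m2, ((κ y) A).toReal = 1 := by
        filter_upwards [kernel_ae_one κ hI2 hA h1] with y hy; rw [hy]; simp
      have e0 := eq_on_msupp (hSF' A hA) hz x hx1
      have e1 := eq_on_msupp (hSF' A hA) ho x hx2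
      rw [e0] at e1
      norm_num at e1
    rcases hcase with ⟨h0, h1⟩ | ⟨h1, h0⟩
    · exact key μ ν hμ.1 hν.1 hμ.2.1 hν.2.1 h0 h1 hxμ hxν
    · exact key ν μ hν.1 hμ.1 hν.2.1 hμ.2.1 h0 h1 hxν hxμ
  have hUdisj : E.PairwiseDisjoint U := by
    intro μ hμ ν hν hne
    rw [Function.onFun, Set.disjoint_left]
    intro x hxμ hxν
    have hdm : Disjoint (msupp μ) (msupp ν) :=
      Set.disjoint_left.mpr fun a ha hb => hsupp_disj μ hμ ν hν hne a ha hb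
    have hsum : (κ x) (msupp μ) + (κ x) (msupp ν) ≤ 1 := by
      rw [← measure_union hdm (isClosed_msupp ν).measurableSet]
      exact prob_le_one
    have h1 : ((κ x) (msupp μ)).toReal + ((κ x) (msupp ν)).toReal ≤ 1 := by
      rw [← ENNReal.toReal_add (measure_ne_top _ _) (measure_ne_top _ _)]
      calc ((κ x) (msupp μ) + (κ x) (msupp ν)).toReal ≤ (1:ℝ≥0∞).toReal :=
            ENNReal.toReal_mono ENNReal.one_ne_top hsum
        _ = 1 := by simp
    have hx1 : (1:ℝ)/2 < ((κ x) (msupp μ)).toReal := hxμ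
    have hx2 : (1:ℝ)/2 < ((κ x) (msupp ν)).toReal := hxν
    linarith
  exact hUdisj.countable_of_isOpen (fun μ _ => hUopen μ) hUne
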